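/- For every natural number n ≥ 2, the group K_n^4 (obtained from the common relations together with g1² = 1, g2² = g3·t, g5^{g4} = g5·t^{2^n}) has order 2^{n+6}, nilpotency class n + 3 (hence coclass 3), and its automorphism group Aut(K_n^4) is not a 2-group. -/

import Mathlib

/-- Generators `g₁, g₂, g₃, g₄, g₅, t` for the coclass-`3` groups `Kₙⁱ`. -/
inductive KGen : Type
  | g1 | g2 | g3 | g4 | g5 | t

namespace KGen

def a1 : FreeGroup KGen := FreeGroup.of KGen.g1
def a2 : FreeGroup KGen := FreeGroup.of KGen.g2
def a3 : FreeGroup KGen := FreeGroup.of KGen.g3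
def a4 : FreeGroup KGen := FreeGroup.of KGen.g4
def a5 : FreeGroup KGen := FreeGroup.of KGen.g5
def tt : FreeGroup KGen := FreeGroup.of KGen.t

/-- Conjugation `x ^ y = y⁻¹ * x * y`. -/
def cnj (x y : FreeGroup KGen) : FreeGroup KGen := y⁻¹ * x * y

/-- The common relators: `g₂^g₁ = g₂g₃`, `g₃^g₁ = g₃t`, `g₃^g₂ = g₃`, `g₃² = t⁻¹`,
`g₄^g₁ = g₄`, `g₄^g₂ = g₄`, `g₄^g₃ = g₄`, `g₄² = 1`, `g₅^g₁ = g₅`, `g₅^g₂ = g₅`,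
`g₅^g₃ = g₅`, `g₅² = 1`, `t^g₁ = t⁻¹`, `t^g₂ = t`, `t^g₃ = t`, `t^g₄ = t`, `t^g₅ = t`,
`t^(2^(n+1)) = 1`. -/
def commonRels (n : ℕ) : Set (FreeGroup KGen) :=
  {cnj a2 a1 * (a2 * a3)⁻¹,
   cnj a3 a1 * (a3 * tt)⁻¹,
   cnj a3 a2 * a3⁻¹,
   a3 ^ 2 * tt,
   cnj a4 a1 * a4⁻¹,
   cnj a4 a2 * a4⁻¹,
   cnj a4 a3 * a4⁻¹,
   a4 ^ 2,
   cnj a5 a1 * a5⁻¹,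
   cnj a5 a2 * a5⁻¹,
   cnj a5 a3 * a5⁻¹,
   a5 ^ 2,
   cnj tt a1 * tt,
   cnj tt a2 * tt⁻¹,
   cnj tt a3 * tt⁻¹,
   cnj tt a4 * tt⁻¹,
   cnj tt a5 * tt⁻¹,
   tt ^ (2 ^ (n + 1))}

end KGen

open KGen

/-- `Kₙ¹`: common relators together with `g₁² = 1`, `g₂² = g₃t`, `g₅^g₄ = g₅`. -/
abbrev K1 (n : ℕ) : Type :=
  PresentedGroup (commonRels n ∪
    {a1 ^ 2, a2 ^ 2 * (a3 * tt)⁻¹, cnj a5 a4 * a5⁻¹})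

/-- `Kₙ²`: common relators together with `g₁² = 1`, `g₂² = g₃t^(1+2^n)`, `g₅^g₄ = g₅`. -/
abbrev K2 (n : ℕ) : Type :=
  PresentedGroup (commonRels n ∪
    {a1 ^ 2, a2 ^ 2 * (a3 * tt ^ (1 + 2 ^ n))⁻¹, cnj a5 a4 * a5⁻¹})

/-- `Kₙ³`: common relators together with `g₁² = t^(2^n)`, `g₂² = g₃t`, `g₅^g₄ = g₅`. -/
abbrev K3 (n : ℕ) : Type :=
  PresentedGroup (commonRels n ∪
    {a1 ^ 2 * (tt ^ (2 ^ n))⁻¹, a2 ^ 2 * (a3 * tt)⁻¹, cnj a5 a4 * a5⁻¹})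

/-- `Kₙ⁴`: common relators together with `g₁² = 1`, `g₂² = g₃t`, `g₅^g₄ = g₅t^(2^n)`. -/
abbrev K4 (n : ℕ) : Type :=
  PresentedGroup (commonRels n ∪
    {a1 ^ 2, a2 ^ 2 * (a3 * tt)⁻¹, cnj a5 a4 * (a5 * tt ^ (2 ^ n))⁻¹})

/-- `Kₙ⁵`: common relators together with `g₁² = 1`, `g₂² = g₃t^(1+2^n)`,
`g₅^g₄ = g₅t^(2^n)`. -/
abbrev K5 (n : ℕ) : Type :=
  PresentedGroup (commonRels n ∪
    {a1 ^ 2, a2 ^ 2 * (a3 * tt ^ (1 + 2 ^ n))⁻¹, cnj a5 a4 * (a5 * tt ^ (2 ^ n))⁻¹})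

/-- `Kₙ⁶`: common relators together with `g₁² = t^(2^n)`, `g₂² = g₃t`,
`g₅^g₄ = g₅t^(2^n)`. -/
abbrev K6 (n : ℕ) : Type :=
  PresentedGroup (commonRels n ∪
    {a1 ^ 2 * (tt ^ (2 ^ n))⁻¹, a2 ^ 2 * (a3 * tt)⁻¹, cnj a5 a4 * (a5 * tt ^ (2 ^ n))⁻¹})



namespace KModel

abbrev Mc (n : ℕ) : ℕ := 2 ^ (n + 3)

instance (n : ℕ) : NeZero (Mc n) := ⟨pow_ne_zero _ two_ne_zero⟩

/-- The model group carrier. -/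
@[ext] structure MG (n : ℕ) where
  a : Bool
  b : ZMod (Mc n)
  c : Bool
  d : Bool

variable {n : ℕ}

namespace MG

def sg (a : Bool) (x : ZMod (Mc n)) : ZMod (Mc n) := cond a (-x) x

@[simp] lemma sg_false (x : ZMod (Mc n)) : sg false x = x := rfl
@[simp] lemma sg_true (x : ZMod (Mc n)) : sg true x = -x := rfl
@[simp] lemma sg_zero (a : Bool) : sg a (0 : ZMod (Mc n)) = 0 := by cases a <;> simp [sg]

def mulM (x y : MG n) : MG n :=
  ⟨xor x.a y.a,
   sg y.a x.b + y.b + cond (x.d && y.c) ((2 : ZMod (Mc n)) ^ (n + 2)) 0,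
   xor x.c y.c, xor x.d y.d⟩

def invM (x : MG n) : MG n :=
  ⟨x.a, -sg x.a x.b - cond (x.d && x.c) ((2 : ZMod (Mc n)) ^ (n + 2)) 0,
   x.c, x.d⟩

lemma hMc : ((2 : ZMod (Mc n)) ^ (n + 3)) = 0 := by
  have : ((2 ^ (n + 3) : ℕ) : ZMod (Mc n)) = 0 := ZMod.natCast_self _
  push_cast at this
  exact this

lemma h2zc : ((2 : ZMod (Mc n)) ^ (n + 2)) * 2 = 0 := by
  have := hMc (n := n)
  linear_combination this - (by ring : ((2:ZMod (Mc n))^(n+3)) = 2^(n+2)*2)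

set_option maxHeartbeats 2000000 in
instance instGroup : Group (MG n) where
  mul := mulM
  one := ⟨false, 0, false, false⟩
  inv := invM
  mul_assoc := by
    rintro ⟨a1, b1, c1, d1⟩ ⟨a2, b2, c2, d2⟩ ⟨a3, b3, c3, d3⟩
    show mulM (mulM _ _) _ = mulM _ (mulM _ _)
    have h := h2zc (n := n)
    simp only [mulM, MG.mk.injEq]
    refine ⟨by cases a1 <;> cases a2 <;> cases a3 <;> rfl, ?_,
      by cases c1 <;> cases c2 <;> cases c3 <;> rfl,
      by cases d1 <;> cases d2 <;> cases d3 <;> rfl⟩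
    cases a2 <;> cases a3 <;> cases d1 <;> cases d2 <;> cases c2 <;> cases c3 <;>
      simp [sg] <;>
      first
        | ring1
        | linear_combination h
        | linear_combination -h
        | linear_combination 2 * h
        | linear_combination -2 * h
  one_mul := by
    rintro ⟨a, b, c, d⟩
    show mulM ⟨false, 0, false, false⟩ _ = _
    simp [mulM]
  mul_one := by
    rintro ⟨a, b, c, d⟩
    show mulM _ ⟨false, 0, false, false⟩ = _
    simp [mulM]
  inv_mul_cancel := by
    rintro ⟨a, b, c, d⟩
    show mulM (invM _) _ = ⟨false, 0, false, false⟩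
    have h := h2zc (n := n)
    simp only [mulM, invM, MG.mk.injEq]
    refine ⟨by cases a <;> rfl, ?_, by cases c <;> rfl, by cases d <;> rfl⟩
    cases a <;> cases c <;> cases d <;> simp [sg] <;>
      first
        | ring1
        | linear_combination h
        | linear_combination -h

@[simp] lemma mk_mul (a b c d a' b' c' d') :
    (⟨a, b, c, d⟩ : MG n) * ⟨a', b', c', d'⟩ =
      ⟨xor a a', sg a' b + b' + cond (d && c') ((2 : ZMod (Mc n)) ^ (n + 2)) 0,
       xor c c', xor d d'⟩ := rfl

@[simp] lemma mk_inv (a b c d) :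
    (⟨a, b, c, d⟩ : MG n)⁻¹ =
      ⟨a, -sg a b - cond (d && c) ((2 : ZMod (Mc n)) ^ (n + 2)) 0, c, d⟩ := rfl

lemma one_def : (1 : MG n) = ⟨false, 0, false, false⟩ := rfl

end MG

end KModel

namespace KModel
open KGen
variable {n : ℕ}
namespace MG

def Am : MG n := ⟨true, 0, false, false⟩
def Bb (x : ZMod (Mc n)) : MG n := ⟨false, x, false, false⟩
def Dm : MG n := ⟨false, 0, true, false⟩
def Em : MG n := ⟨false, 0, false, true⟩

@[simp] lemma Bb_mul (x y : ZMod (Mc n)) : Bb x * Bb y = Bb (x + y) := by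
  simp [Bb]

@[simp] lemma Bb_inv (x : ZMod (Mc n)) : (Bb x)⁻¹ = Bb (-x) := by
  simp [Bb]

@[simp] lemma mk_pow (x : ZMod (Mc n)) (k : ℕ) :
    (⟨false, x, false, false⟩ : MG n) ^ k = ⟨false, (k : ZMod (Mc n)) * x, false, false⟩ := by
  induction k with
  | zero => norm_num; rfl
  | succ k ih =>
      rw [pow_succ, ih, mk_mul]
      push_cast
      norm_num
      ring_nf

lemma Bb_pow (x : ZMod (Mc n)) (k : ℕ) : (Bb x) ^ k = Bb ((k : ZMod (Mc n)) * x) :=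
  mk_pow x k

lemma Bb_zero : Bb (0 : ZMod (Mc n)) = 1 := rfl

end MG

open MG

def fgen (n : ℕ) : KGen → MG n
  | .g1 => Am
  | .g2 => Bb 1
  | .g3 => Bb (-2)
  | .g4 => Dm
  | .g5 => Em
  | .t  => Bb 4

lemma fgen_rels :
    ∀ r ∈ commonRels n ∪
      ({a1 ^ 2, a2 ^ 2 * (a3 * KGen.tt)⁻¹, cnj a5 a4 * (a5 * KGen.tt ^ (2 ^ n))⁻¹} :
        Set (FreeGroup KGen)),
      FreeGroup.lift (fgen n) r = 1 := by
  have hM := MG.hMc (n := n)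
  intro r hr
  rcases hr with hr | hr <;>
    simp only [commonRels, Set.mem_insert_iff, Set.mem_singleton_iff] at hr
  · rcases hr with rfl|rfl|rfl|rfl|rfl|rfl|rfl|rfl|rfl|rfl|rfl|rfl|rfl|rfl|rfl|rfl|rfl|rfl <;>
      simp [cnj, a1, a2, a3, a4, a5, KGen.tt, fgen, Am, Bb, Dm, Em, pow_two, MG.one_def,
        MG.mk.injEq] <;>
      push_cast <;>
      first
        | ring1
        | linear_combination hM
        | linear_combination -hM
  · rcases hr with rfl|rfl|rfl <;>
      simp [cnj, a1, a2, a3, a4, a5, KGen.tt, fgen, Am, Bb, Dm, Em, pow_two, MG.one_def,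
        MG.mk.injEq] <;>
      push_cast <;>
      first
        | ring1
        | linear_combination hM
        | linear_combination -hM

def phi (n : ℕ) : K4 n →* MG n := PresentedGroup.toGroup (fgen_rels (n := n))

end KModel

namespace KModel
open KGen
variable {n : ℕ}

/-- The relator set of `K4 n`. -/
abbrev RL (n : ℕ) : Set (FreeGroup KGen) :=
  commonRels n ∪ {a1 ^ 2, a2 ^ 2 * (a3 * KGen.tt)⁻¹, cnj a5 a4 * (a5 * KGen.tt ^ (2 ^ n))⁻¹}

abbrev P (n : ℕ) : Type := PresentedGroup (RL n)

def eA : P n := PresentedGroup.of KGen.g1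
def eB : P n := PresentedGroup.of KGen.g2
def eC : P n := PresentedGroup.of KGen.g3
def eD : P n := PresentedGroup.of KGen.g4
def eE : P n := PresentedGroup.of KGen.g5
def eT : P n := PresentedGroup.of KGen.t

lemma relP {r : FreeGroup KGen} (h : r ∈ RL n) : PresentedGroup.mk (RL n) r = 1 :=
  (QuotientGroup.eq_one_iff r).mpr (Subgroup.subset_normalClosure h)

@[simp] lemma mk_a1 : PresentedGroup.mk (RL n) a1 = eA := rfl
@[simp] lemma mk_a2 : PresentedGroup.mk (RL n) a2 = eB := rfl
@[simp] lemma mk_a3 : PresentedGroup.mk (RL n) a3 = eC := rfl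
@[simp] lemma mk_a4 : PresentedGroup.mk (RL n) a4 = eD := rfl
@[simp] lemma mk_a5 : PresentedGroup.mk (RL n) a5 = eE := rfl
@[simp] lemma mk_tt : PresentedGroup.mk (RL n) KGen.tt = eT := rfl

lemma r1 : (eA : P n)⁻¹ * eB * eA = eB * eC := by
  have h := relP (n := n) (show cnj a2 a1 * (a2 * a3)⁻¹ ∈ RL n by simp [commonRels])
  simp only [cnj, map_mul, map_inv, map_pow, mk_a1, mk_a2, mk_a3, mk_a4, mk_a5, mk_tt,
    mul_inv_eq_one] at h
  exact h

lemma r3 : (eB : P n)⁻¹ * eC * eB = eC := by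
  have h := relP (n := n) (show cnj a3 a2 * a3⁻¹ ∈ RL n by simp [commonRels])
  simp only [cnj, map_mul, map_inv, map_pow, mk_a1, mk_a2, mk_a3, mk_a4, mk_a5, mk_tt,
    mul_inv_eq_one] at h
  exact h

lemma r4 : (eC : P n) ^ 2 * eT = 1 := by
  have h := relP (n := n) (show a3 ^ 2 * KGen.tt ∈ RL n by simp [commonRels])
  simp only [cnj, map_mul, map_inv, map_pow, mk_a1, mk_a2, mk_a3, mk_a4, mk_a5, mk_tt] at h
  exact h

lemma r5 : (eA : P n)⁻¹ * eD * eA = eD := by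
  have h := relP (n := n) (show cnj a4 a1 * a4⁻¹ ∈ RL n by simp [commonRels])
  simp only [cnj, map_mul, map_inv, map_pow, mk_a1, mk_a2, mk_a3, mk_a4, mk_a5, mk_tt,
    mul_inv_eq_one] at h
  exact h

lemma r6 : (eB : P n)⁻¹ * eD * eB = eD := by
  have h := relP (n := n) (show cnj a4 a2 * a4⁻¹ ∈ RL n by simp [commonRels])
  simp only [cnj, map_mul, map_inv, map_pow, mk_a1, mk_a2, mk_a3, mk_a4, mk_a5, mk_tt,
    mul_inv_eq_one] at h
  exact h

lemma r8 : (eD : P n) ^ 2 = 1 := by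
  have h := relP (n := n) (show a4 ^ 2 ∈ RL n by simp [commonRels])
  simp only [cnj, map_mul, map_inv, map_pow, mk_a1, mk_a2, mk_a3, mk_a4, mk_a5, mk_tt] at h
  exact h

lemma r9 : (eA : P n)⁻¹ * eE * eA = eE := by
  have h := relP (n := n) (show cnj a5 a1 * a5⁻¹ ∈ RL n by simp [commonRels])
  simp only [cnj, map_mul, map_inv, map_pow, mk_a1, mk_a2, mk_a3, mk_a4, mk_a5, mk_tt,
    mul_inv_eq_one] at h
  exact h

lemma r10 : (eB : P n)⁻¹ * eE * eB = eE := by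
  have h := relP (n := n) (show cnj a5 a2 * a5⁻¹ ∈ RL n by simp [commonRels])
  simp only [cnj, map_mul, map_inv, map_pow, mk_a1, mk_a2, mk_a3, mk_a4, mk_a5, mk_tt,
    mul_inv_eq_one] at h
  exact h

lemma r12 : (eE : P n) ^ 2 = 1 := by
  have h := relP (n := n) (show a5 ^ 2 ∈ RL n by simp [commonRels])
  simp only [cnj, map_mul, map_inv, map_pow, mk_a1, mk_a2, mk_a3, mk_a4, mk_a5, mk_tt] at h
  exact h

lemma r18 : (eT : P n) ^ (2 ^ (n + 1)) = 1 := by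
  have h := relP (n := n) (show KGen.tt ^ (2 ^ (n + 1)) ∈ RL n by simp [commonRels])
  simp only [cnj, map_mul, map_inv, map_pow, mk_a1, mk_a2, mk_a3, mk_a4, mk_a5, mk_tt] at h
  exact h

lemma s1 : (eA : P n) ^ 2 = 1 := by
  have h := relP (n := n) (show a1 ^ 2 ∈ RL n by simp [commonRels])
  simp only [cnj, map_mul, map_inv, map_pow, mk_a1, mk_a2, mk_a3, mk_a4, mk_a5, mk_tt] at h
  exact h

lemma s2 : (eB : P n) ^ 2 = eC * eT := by
  have h := relP (n := n) (show a2 ^ 2 * (a3 * KGen.tt)⁻¹ ∈ RL n by simp [commonRels])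
  simp only [cnj, map_mul, map_inv, map_pow, mk_a1, mk_a2, mk_a3, mk_a4, mk_a5, mk_tt,
    mul_inv_eq_one] at h
  exact h

lemma s3 : (eD : P n)⁻¹ * eE * eD = eE * eT ^ (2 ^ n) := by
  have h := relP (n := n)
    (show cnj a5 a4 * (a5 * KGen.tt ^ (2 ^ n))⁻¹ ∈ RL n by simp [commonRels])
  simp only [cnj, map_mul, map_inv, map_pow, mk_a1, mk_a2, mk_a3, mk_a4, mk_a5, mk_tt,
    mul_inv_eq_one] at h
  exact h

lemma hT' : (eT : P n) = (eC ^ 2)⁻¹ := by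
  have h := r4 (n := n); rw [mul_eq_one_iff_eq_inv] at h; rw [h, inv_inv]

lemma hC : (eC : P n) = (eB ^ 2)⁻¹ := by
  have h2 := s2 (n := n)
  rw [hT'] at h2
  have h3 : (eB : P n) ^ 2 = eC⁻¹ := by
    rw [h2, pow_two, mul_inv_rev, mul_inv_cancel_left]
  rw [h3, inv_inv]

lemma hT : (eT : P n) = eB ^ 4 := by
  rw [hT', hC, inv_pow, inv_inv, ← pow_mul]

lemma hBm : (eB : P n) ^ (2 ^ (n + 3)) = 1 := by
  have := r18 (n := n)
  rw [hT, ← pow_mul] at this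
  have e : 4 * 2 ^ (n + 1) = 2 ^ (n + 3) := by ring
  rwa [e] at this

lemma hConjB : (eA : P n)⁻¹ * eB * eA = eB⁻¹ := by
  rw [r1, hC, pow_two, mul_inv_rev, mul_inv_cancel_left]

lemma hConjBk (k : ℕ) : (eA : P n)⁻¹ * eB ^ k * eA = (eB ^ k)⁻¹ := by
  have h := map_pow (MulAut.conj (eA : P n)⁻¹) eB k
  simp only [MulAut.conj_apply, inv_inv] at h
  rw [h, hConjB, inv_pow]

lemma cBD : Commute (eB : P n) eD := by
  have h := r6 (n := n)
  have h2 := congrArg (fun z => (eB : P n) * z) h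
  have h3 : (eB : P n) * eD = eD * eB := by simpa [mul_assoc] using h2.symm
  exact h3

lemma cBE : Commute (eB : P n) eE := by
  have h := r10 (n := n)
  have h2 := congrArg (fun z => (eB : P n) * z) h
  have h3 : (eB : P n) * eE = eE * eB := by simpa [mul_assoc] using h2.symm
  exact h3

lemma cAD : Commute (eA : P n) eD := by
  have h := r5 (n := n)
  have h2 := congrArg (fun z => (eA : P n) * z) h
  have h3 : (eA : P n) * eD = eD * eA := by simpa [mul_assoc] using h2.symm
  exact h3

lemma cAE : Commute (eA : P n) eE := by
  have h := r9 (n := n)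
  have h2 := congrArg (fun z => (eA : P n) * z) h
  have h3 : (eA : P n) * eE = eE * eA := by simpa [mul_assoc] using h2.symm
  exact h3

def eZ : P n := eB ^ (2 ^ (n + 2))

lemma hED : (eE : P n) * eD = eD * (eE * eZ) := by
  have h := s3 (n := n)
  have hTZ : (eT : P n) ^ (2 ^ n) = eZ := by
    rw [hT, ← pow_mul, eZ]
    congr 1
    ring
  rw [hTZ] at h
  have h2 := congrArg (fun z => (eD : P n) * z) h
  simpa [mul_assoc] using h2

end KModel

namespace KModel
open KGen MG
open scoped commutatorElement
variable {n : ℕ}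

instance : Fact (1 < Mc n) := ⟨by
  have : (2:ℕ) ^ 0 < 2 ^ (n + 3) := Nat.pow_lt_pow_right one_lt_two (by omega)
  simpa using this⟩

/-- Normal-form power of `eB` indexed by `ZMod`. -/
def Bz (x : ZMod (Mc n)) : P n := eB ^ x.val

lemma Bz_natCast (j : ℕ) : Bz ((j : ZMod (Mc n))) = (eB : P n) ^ j := by
  rw [Bz, ZMod.val_natCast]
  exact (pow_eq_pow_mod j hBm).symm

@[simp] lemma Bz_zero : Bz (0 : ZMod (Mc n)) = (1 : P n) := by
  have := Bz_natCast (n := n) 0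
  simpa using this

lemma Bz_add (x y : ZMod (Mc n)) : Bz (x + y) = Bz x * Bz y := by
  rw [Bz, Bz, Bz, ZMod.val_add, ← pow_eq_pow_mod _ hBm, pow_add]

lemma Bz_neg (x : ZMod (Mc n)) : Bz (-x) = (Bz x)⁻¹ := by
  have h : Bz x * Bz (-x) = 1 := by
    rw [← Bz_add]
    simp
  exact (inv_eq_of_mul_eq_one_right h).symm

lemma Bz_one : Bz (1 : ZMod (Mc n)) = eB := by
  have := Bz_natCast (n := n) 1
  simpa using this

lemma Bz_zc : Bz ((2 : ZMod (Mc n)) ^ (n + 2)) = (eZ : P n) := by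
  have : ((2:ZMod (Mc n)) ^ (n+2)) = ((2 ^ (n+2) : ℕ) : ZMod (Mc n)) := by push_cast; ring
  rw [this, Bz_natCast, eZ]

/-- Commutes: every power of `eB` commutes with `eD`, `eE`. -/
lemma cBzD (x : ZMod (Mc n)) : Commute (Bz x) eD := (cBD.pow_left _)
lemma cBzE (x : ZMod (Mc n)) : Commute (Bz x) eE := (cBE.pow_left _)

def Aa (a : Bool) : P n := cond a eA 1
def Dd (c : Bool) : P n := cond c eD 1
def Ee (d : Bool) : P n := cond d eE 1

def zterm (b : Bool) : ZMod (Mc n) := cond b ((2 : ZMod (Mc n)) ^ (n + 2)) 0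

/- Normalization toolkit -/
lemma W1 (a a' : Bool) : (Aa a : P n) * Aa a' = Aa (xor a a') := by
  cases a <;> cases a' <;> simp [Aa, ← pow_two, s1]

lemma W2 (x y : ZMod (Mc n)) : Bz x * Bz y = Bz (x + y) := (Bz_add x y).symm

lemma W3 (c c' : Bool) : (Dd c : P n) * Dd c' = Dd (xor c c') := by
  cases c <;> cases c' <;> simp [Dd, ← pow_two, r8]

lemma W4 (d d' : Bool) : (Ee d : P n) * Ee d' = Ee (xor d d') := by
  cases d <;> cases d' <;> simp [Ee, ← pow_two, r12]

lemma W5 (x : ZMod (Mc n)) (a : Bool) : Bz x * Aa a = Aa a * Bz (sg a x) := by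
  cases a
  · simp [Aa]
  · have h := hConjBk (n := n) (x.val)
    have h2 := congrArg (fun z => (eA : P n) * z) h
    have h3 : (eB : P n) ^ x.val * eA = eA * ((eB : P n) ^ x.val)⁻¹ := by
      simpa [mul_assoc] using h2
    simp only [Aa, sg_true, Bool.cond_true, Bz_neg]
    exact h3

lemma W6 (c : Bool) (a : Bool) : (Dd c : P n) * Aa a = Aa a * Dd c := by
  cases a <;> cases c <;> simp [Aa, Dd, (cAD (n := n)).symm.eq]

lemma W7 (d : Bool) (a : Bool) : (Ee d : P n) * Aa a = Aa a * Ee d := by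
  cases a <;> cases d <;> simp [Aa, Ee, (cAE (n := n)).symm.eq]

lemma W8 (c : Bool) (x : ZMod (Mc n)) : (Dd c : P n) * Bz x = Bz x * Dd c := by
  cases c <;> simp [Dd, ((cBzD (n := n) x)).eq]

lemma W9 (d : Bool) (x : ZMod (Mc n)) : (Ee d : P n) * Bz x = Bz x * Ee d := by
  cases d <;> simp [Ee, ((cBzE (n := n) x)).eq]

lemma W10 (d c : Bool) :
    (Ee d : P n) * Dd c = Dd c * (Bz (zterm (d && c)) * Ee d) := by
  cases d <;> cases c <;> simp only [Ee, Dd, zterm, Bool.and_self, Bool.and_true,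
    Bool.and_false, Bool.cond_true, Bool.cond_false, Bz_zero, one_mul, mul_one] <;>
    try rfl
  · -- eE * eD = eD * (Bz zc * eE)
    rw [Bz_zc, hED]
    congr 1
    have h := (cBzE (n := n) ((2 : ZMod (Mc n)) ^ (n + 2))).eq
    rw [Bz_zc] at h
    exact h.symm

lemma W1' (a a' : Bool) (z : P n) : Aa a * (Aa a' * z) = Aa (xor a a') * z := by
  rw [← mul_assoc, W1]
lemma W2' (x y : ZMod (Mc n)) (z : P n) : Bz x * (Bz y * z) = Bz (x + y) * z := by
  rw [← mul_assoc, W2]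
lemma W3' (c c' : Bool) (z : P n) : Dd c * (Dd c' * z) = Dd (xor c c') * z := by
  rw [← mul_assoc, W3]
lemma W4' (d d' : Bool) (z : P n) : Ee d * (Ee d' * z) = Ee (xor d d') * z := by
  rw [← mul_assoc, W4]
lemma W5' (x : ZMod (Mc n)) (a : Bool) (z : P n) :
    Bz x * (Aa a * z) = Aa a * (Bz (sg a x) * z) := by
  rw [← mul_assoc, W5, mul_assoc]
lemma W6' (c a : Bool) (z : P n) : Dd c * (Aa a * z) = Aa a * (Dd c * z) := by
  rw [← mul_assoc, W6, mul_assoc]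
lemma W7' (d a : Bool) (z : P n) : Ee d * (Aa a * z) = Aa a * (Ee d * z) := by
  rw [← mul_assoc, W7, mul_assoc]
lemma W8' (c : Bool) (x : ZMod (Mc n)) (z : P n) : Dd c * (Bz x * z) = Bz x * (Dd c * z) := by
  rw [← mul_assoc, W8, mul_assoc]
lemma W9' (d : Bool) (x : ZMod (Mc n)) (z : P n) : Ee d * (Bz x * z) = Bz x * (Ee d * z) := by
  rw [← mul_assoc, W9, mul_assoc]
lemma W10' (d c : Bool) (z : P n) :
    Ee d * (Dd c * z) = Dd c * (Bz (zterm (d && c)) * (Ee d * z)) := by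
  rw [← mul_assoc, W10, mul_assoc, mul_assoc]

def psiF : MG n → P n := fun x => Aa x.a * (Bz x.b * (Dd x.c * Ee x.d))

def psi (n : ℕ) : MG n →* P n where
  toFun := psiF
  map_one' := by
    show psiF ⟨false, 0, false, false⟩ = 1
    simp [psiF, Aa, Dd, Ee]
  map_mul' := by
    rintro ⟨a, b, c, d⟩ ⟨a', b', c', d'⟩
    show psiF (MG.mk _ _ _ _ * MG.mk _ _ _ _) = _
    rw [MG.mk_mul]
    simp only [psiF]
    simp only [mul_assoc]
    rw [show (cond (d && c') ((2 : ZMod (Mc n)) ^ (n + 2)) 0) = zterm (d && c') from rfl]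
    simp only [W10', W10, W9', W9, W8', W8, W7', W7, W6', W6, W5', W5, W4', W4, W3', W3,
      W2', W2, W1', W1, mul_one]
    ring_nf

lemma phi_of (x : KGen) : phi n (PresentedGroup.of x) = fgen n x := PresentedGroup.toGroup.of _

lemma Bz_two : Bz (2 : ZMod (Mc n)) = (eB : P n) ^ 2 := by
  have : ((2 : ZMod (Mc n))) = ((2 : ℕ) : ZMod (Mc n)) := by push_cast; ring
  rw [this, Bz_natCast]

lemma Bz_four : Bz (4 : ZMod (Mc n)) = (eB : P n) ^ 4 := by
  have : ((4 : ZMod (Mc n))) = ((4 : ℕ) : ZMod (Mc n)) := by push_cast; ring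
  rw [this, Bz_natCast]

lemma psi_phi (x : P n) : psi n (phi n x) = x := by
  have h : (psi n).comp (phi n) = MonoidHom.id (P n) := by
    apply PresentedGroup.ext
    intro x
    cases x with
    | g1 => show psi n (phi n (PresentedGroup.of .g1)) = eA
            rw [phi_of]
            show psiF (Am : MG n) = eA
            simp [psiF, Am, Aa, Dd, Ee]
    | g2 => show psi n (phi n (PresentedGroup.of .g2)) = eB
            rw [phi_of]
            show psiF (MG.Bb 1 : MG n) = eB
            simp [psiF, MG.Bb, Aa, Dd, Ee, Bz_one]
    | g3 => show psi n (phi n (PresentedGroup.of .g3)) = eC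
            rw [phi_of]
            show psiF (MG.Bb (-2) : MG n) = eC
            simp only [psiF, MG.Bb, Aa, Dd, Ee, Bool.cond_false, one_mul, mul_one]
            rw [Bz_neg, Bz_two, ← hC]
    | g4 => show psi n (phi n (PresentedGroup.of .g4)) = eD
            rw [phi_of]
            show psiF (Dm : MG n) = eD
            simp [psiF, Dm, Aa, Dd, Ee]
    | g5 => show psi n (phi n (PresentedGroup.of .g5)) = eE
            rw [phi_of]
            show psiF (Em : MG n) = eE
            simp [psiF, Em, Aa, Dd, Ee]
    | t  => show psi n (phi n (PresentedGroup.of .t)) = eT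
            rw [phi_of]
            show psiF (MG.Bb 4 : MG n) = eT
            simp only [psiF, MG.Bb, Aa, Dd, Ee, Bool.cond_false, one_mul, mul_one]
            rw [Bz_four, ← hT]
  simpa using DFunLike.congr_fun h x

lemma phi_psi (x : MG n) : phi n (psi n x) = x := by
  rcases x with ⟨a, b, c, d⟩
  have hb : ((b.val : ℕ) : ZMod (Mc n)) = b := ZMod.natCast_rightInverse b
  show phi n (psiF _) = _
  simp only [psiF]
  rcases a <;> rcases c <;> rcases d <;>
    simp [Aa, Dd, Ee, Bz, map_mul, map_pow, eA, eB, eD, eE, phi_of, fgen, Am, MG.Bb, Dm, Em,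
      MG.mk_pow, hb, MG.one_def]

/-- The presented group `K4 n` is isomorphic to the model group. -/
def eqv (n : ℕ) : P n ≃* MG n :=
  { toFun := phi n
    invFun := psi n
    left_inv := psi_phi
    right_inv := phi_psi
    map_mul' := map_mul (phi n) }

/-! ### Cardinality of the model -/

lemma card_MG : Nat.card (MG n) = 2 ^ (n + 6) := by
  have e : MG n ≃ Bool × ZMod (Mc n) × Bool × Bool :=
    ⟨fun x => (x.a, x.b, x.c, x.d), fun p => ⟨p.1, p.2.1, p.2.2.1, p.2.2.2⟩,
     fun x => rfl, fun p => rfl⟩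
  rw [Nat.card_congr e, Nat.card_prod, Nat.card_prod, Nat.card_prod, Nat.card_zmod]
  have hb2 : Nat.card Bool = 2 := by simp [Nat.card_eq_fintype_card]
  simp only [hb2]
  ring

/-! ### Lower central series: lower bound -/

lemma commBbA (x : ZMod (Mc n)) : ⁅(Bb x : MG n), Am⁆ = Bb (2 * x) := by
  rw [commutatorElement_def]
  simp [Am, Bb]
  ring_nf

lemma lower_mem : ∀ k : ℕ, (Bb ((2 : ZMod (Mc n)) ^ (k + 1)) : MG n) ∈
    (⊤ : Subgroup (MG n)).lowerCentralSeries (k + 1) := by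
  intro k
  induction k with
  | zero =>
      rw [Subgroup.lowerCentralSeries_succ]
      have h : (Bb ((2 : ZMod (Mc n)) ^ 1) : MG n) = ⁅(Bb 1 : MG n), Am⁆ := by
        rw [commBbA]; norm_num
      rw [h]
      exact Subgroup.commutator_mem_commutator (by simp [Subgroup.lowerCentralSeries_zero])
        (Subgroup.mem_top _)
  | succ k ih =>
      rw [Subgroup.lowerCentralSeries_succ]
      have h : (Bb ((2 : ZMod (Mc n)) ^ (k + 2)) : MG n) =
          ⁅(Bb ((2 : ZMod (Mc n)) ^ (k + 1)) : MG n), Am⁆ := by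
        rw [commBbA]; ring_nf
      rw [h]
      exact Subgroup.commutator_mem_commutator ih (Subgroup.mem_top _)

lemma zc_ne_zero : ((2 : ZMod (Mc n)) ^ (n + 2)) ≠ 0 := by
  have hcast : ((2 : ZMod (Mc n)) ^ (n + 2)) = ((2 ^ (n + 2) : ℕ) : ZMod (Mc n)) := by
    push_cast; ring
  rw [hcast, Ne, ZMod.natCast_eq_zero_iff]
  intro hdvd
  have := Nat.le_of_dvd (Nat.pow_pos (by norm_num)) hdvd
  exact absurd (Nat.pow_le_pow_iff_right (a := 2) (by norm_num) |>.mp this) (by omega)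

lemma lcs_ne_bot : (⊤ : Subgroup (MG n)).lowerCentralSeries (n + 2) ≠ ⊥ := by
  intro h
  have hm := lower_mem (n := n) (n + 1)
  rw [h, Subgroup.mem_bot] at hm
  have : ((2 : ZMod (Mc n)) ^ (n + 2)) = 0 := by
    have := congrArg MG.b hm
    simpa [Bb, MG.one_def] using this
  exact zc_ne_zero this

/-! ### Lower central series: upper bound -/

def Hk (n k : ℕ) : Subgroup (MG n) where
  carrier := {x | x.a = false ∧ x.c = false ∧ x.d = false ∧ ∃ u, x.b = 2 ^ k * u}
  one_mem' := ⟨rfl, rfl, rfl, 0, by simp [MG.one_def]⟩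
  mul_mem' := by
    intro x y hx hy
    obtain ⟨ha, hc, hd, u, hu⟩ := hx
    obtain ⟨ha', hc', hd', u', hu'⟩ := hy
    refine ⟨?_, ?_, ?_, u + u', ?_⟩
    · show xor x.a y.a = false
      rw [ha, ha']; rfl
    · show xor x.c y.c = false
      rw [hc, hc']; rfl
    · show xor x.d y.d = false
      rw [hd, hd']; rfl
    · show sg y.a x.b + y.b + cond (x.d && y.c) _ 0 = _
      rw [ha', hd, hu, hu']
      simp only [sg_false, Bool.false_and, Bool.cond_false, add_zero]
      ring
  inv_mem' := by
    intro x hx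
    obtain ⟨ha, hc, hd, u, hu⟩ := hx
    refine ⟨ha, hc, hd, -u, ?_⟩
    show -sg x.a x.b - cond (x.d && x.c) _ 0 = _
    rw [ha, hd, hu]
    simp only [sg_false, Bool.false_and, Bool.cond_false, sub_zero]
    ring

def c2 : ZMod (Mc n) →+* ZMod 2 :=
  ZMod.castHom (dvd_pow_self 2 (by omega : n + 3 ≠ 0)) (ZMod 2)

lemma even_of_c2 {x : ZMod (Mc n)} (h : c2 (n := n) x = 0) : ∃ u, x = 2 * u := by
  have hx : c2 (n := n) x = ((x.val : ℕ) : ZMod 2) := by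
    rw [c2, ZMod.castHom_apply, ← ZMod.natCast_val]
  rw [hx, ZMod.natCast_eq_zero_iff] at h
  obtain ⟨t, ht⟩ := h
  refine ⟨(t : ZMod (Mc n)), ?_⟩
  have hb : ((x.val : ℕ) : ZMod (Mc n)) = x := ZMod.natCast_rightInverse x
  rw [← hb, ht]
  push_cast
  ring

lemma c2_zc : c2 (n := n) ((2 : ZMod (Mc n)) ^ (n + 2)) = 0 := by
  rw [map_pow]
  have : c2 (n := n) 2 = 0 := by
    have : ((2 : ℕ) : ZMod 2) = 0 := by decide
    simpa using (map_natCast (c2 (n := n)) 2).symm ▸ this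
  rw [this, zero_pow (by omega : n + 2 ≠ 0)]

def tb (a : Bool) : ZMod 2 := cond a 1 0

/-- The abelianization detector homomorphism. -/
def Phi (n : ℕ) : MG n →* Multiplicative (ZMod 2 × ZMod 2 × ZMod 2 × ZMod 2) where
  toFun x := Multiplicative.ofAdd (tb x.a, c2 (n := n) x.b, tb x.c, tb x.d)
  map_one' := by
    show Multiplicative.ofAdd (tb false, c2 (n := n) 0, tb false, tb false) = 1
    simp [tb]
  map_mul' := by
    rintro ⟨a, b, c, d⟩ ⟨a', b', c', d'⟩
    rw [MG.mk_mul, ← ofAdd_add]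
    apply congrArg Multiplicative.ofAdd
    have hzc := c2_zc (n := n)
    refine Prod.ext ?_ (Prod.ext ?_ (Prod.ext ?_ ?_))
    · show tb (xor a a') = tb a + tb a'
      cases a <;> cases a' <;> decide
    · show c2 (n := n) (sg a' b + b' + _) = c2 (n := n) b + c2 (n := n) b'
      cases a' <;> cases d <;> cases c' <;>
        simp [map_add, map_neg, hzc, CharTwo.neg_eq]
    · show tb (xor c c') = tb c + tb c'
      cases c <;> cases c' <;> decide
    · show tb (xor d d') = tb d + tb d'
      cases d <;> cases d' <;> decide

lemma mem_Hk1_of_Phi {x : MG n} (h : Phi n x = 1) : x ∈ Hk n 1 := by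
  rcases x with ⟨a, b, c, d⟩
  have h' := congrArg Multiplicative.toAdd h
  simp only [Phi, MonoidHom.coe_mk, OneHom.coe_mk] at h'
  have h1 : tb a = 0 ∧ c2 (n := n) b = 0 ∧ tb c = 0 ∧ tb d = 0 := by
    have := h'
    refine ⟨congrArg (fun p => p.1) this, congrArg (fun p => p.2.1) this,
      congrArg (fun p => p.2.2.1) this, congrArg (fun p => p.2.2.2) this⟩
  obtain ⟨ha, hb, hc, hd⟩ := h1
  refine ⟨?_, ?_, ?_, ?_⟩
  · cases a; rfl; exact absurd ha (by decide)
  · cases c; rfl; exact absurd hc (by decide)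
  · cases d; rfl; exact absurd hd (by decide)
  · simpa using even_of_c2 hb

lemma lcs1_le : (⊤ : Subgroup (MG n)).lowerCentralSeries 1 ≤ Hk n 1 := by
  rw [Subgroup.lowerCentralSeries_succ, Subgroup.lowerCentralSeries_zero]
  refine Subgroup.commutator_le.mpr fun g _ h _ => ?_
  apply mem_Hk1_of_Phi
  rw [map_commutatorElement]
  exact commutatorElement_eq_one_iff_commute.mpr (mul_comm _ _)

lemma step_le (k : ℕ) : ⁅Hk n (k + 1), (⊤ : Subgroup (MG n))⁆ ≤ Hk n (k + 2) := by
  have hM := MG.h2zc (n := n)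
  refine Subgroup.commutator_le.mpr fun g hg h _ => ?_
  rcases g with ⟨a, b, c, d⟩
  obtain ⟨ha, hc, hd, u, hu⟩ := hg
  dsimp at ha hc hd
  subst ha; subst hc; subst hd; subst hu
  rcases h with ⟨a', b', c', d'⟩
  rw [commutatorElement_def]
  refine ⟨?_, ?_, ?_, ?_⟩
  · cases a' <;> simp
  · cases c' <;> simp
  · cases d' <;> simp
  · show ∃ u', _ = 2 ^ (k + 2) * u'
    rcases a' <;> rcases c' <;> rcases d' <;>
      simp <;>
      first
        | exact ⟨0, by ring1⟩
        | exact ⟨u, by first | ring1 | linear_combination (2 ^ k : ZMod (Mc n)) * hM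
                              | linear_combination (-(2 ^ k) : ZMod (Mc n)) * hM⟩
        | exact ⟨-u, by first | ring1 | linear_combination hM | linear_combination -hM
                              | linear_combination (2 ^ k : ZMod (Mc n)) * hM
                              | linear_combination (-(2 ^ k) : ZMod (Mc n)) * hM⟩

lemma lcs_le_Hk : ∀ k : ℕ, (⊤ : Subgroup (MG n)).lowerCentralSeries (k + 1) ≤ Hk n (k + 1) := by
  intro k
  induction k with
  | zero => exact lcs1_le
  | succ k ih =>
      rw [Subgroup.lowerCentralSeries_succ]
      exact le_trans (Subgroup.commutator_mono ih le_rfl) (step_le k)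

lemma lcs_bot : (⊤ : Subgroup (MG n)).lowerCentralSeries (n + 3) = ⊥ := by
  rw [eq_bot_iff]
  refine le_trans (lcs_le_Hk (n + 2)) ?_
  rintro ⟨a, b, c, d⟩ ⟨ha, hc, hd, u, hu⟩
  dsimp at ha hc hd hu
  subst ha; subst hc; subst hd
  have hb : b = 0 := by
    rw [hu, show ((2 : ZMod (Mc n)) ^ (n + 3)) = 0 from MG.hMc, zero_mul]
  rw [Subgroup.mem_bot, hb, MG.one_def]

/-! ### An automorphism of order 3 -/

def tbM (a : Bool) : ZMod (Mc n) := cond a 1 0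

def thF : MG n → MG n := fun x =>
  ⟨x.a,
   x.b + (2 : ZMod (Mc n)) ^ (n + 1) * (tbM x.d - tbM x.a)
       + (2 : ZMod (Mc n)) ^ (n + 2) * (tbM x.d * (tbM x.a + tbM x.c)),
   x.d, xor (xor x.a x.c) x.d⟩

lemma h40 : ((2 : ZMod (Mc n)) ^ (n + 1)) * 4 = 0 := by
  have := MG.hMc (n := n)
  linear_combination this - (by ring : ((2 : ZMod (Mc n)) ^ (n + 3)) = 2 ^ (n + 1) * 4)

set_option maxHeartbeats 2000000 in
lemma thF_mul (x y : MG n) : thF (x * y) = thF x * thF y := by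
  have h := h40 (n := n)
  rcases x with ⟨a, b, c, d⟩
  rcases y with ⟨a', b', c', d'⟩
  rw [MG.mk_mul]
  show thF _ = thF _ * thF _
  simp only [thF, MG.mk_mul]
  refine MG.ext (by cases a <;> cases a' <;> rfl) ?_
    (by cases d <;> cases d' <;> rfl)
    (by cases a <;> cases a' <;> cases c <;> cases c' <;> cases d <;> cases d' <;> rfl)
  cases a <;> cases a' <;> cases c <;> cases c' <;> cases d <;> cases d' <;>
    simp [tbM] <;>
    first
      | ring1
      | linear_combination h
      | linear_combination -h
      | linear_combination 2 * h
      | linear_combination -2 * h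
      | linear_combination 3 * h
      | linear_combination -3 * h

set_option maxHeartbeats 1000000 in
lemma thF_cube (x : MG n) : thF (thF (thF x)) = x := by
  have h := h40 (n := n)
  rcases x with ⟨a, b, c, d⟩
  simp only [thF]
  refine MG.ext rfl ?_ (by cases a <;> cases c <;> cases d <;> rfl)
    (by cases a <;> cases c <;> cases d <;> rfl)
  cases a <;> cases c <;> cases d <;>
    simp [tbM] <;>
    first
      | ring1
      | linear_combination h
      | linear_combination -h
      | linear_combination 2 * h
      | linear_combination -2 * h
      | linear_combination 3 * h
      | linear_combination -3 * h

def theq (n : ℕ) : MG n ≃* MG n :=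
  { toFun := thF
    invFun := thF ∘ thF
    left_inv := fun x => thF_cube x
    right_inv := fun x => thF_cube x
    map_mul' := thF_mul }

lemma theq_ne : theq n (Dm : MG n) ≠ Dm := by
  show thF (Dm : MG n) ≠ Dm
  intro hcon
  have h := congrArg MG.c hcon
  simp only [thF, Dm] at h
  exact absurd h (by decide)

/-! ### Transport to the presented group -/

def alpha (n : ℕ) : MulAut (P n) := ((eqv n).trans (theq n)).trans (eqv n).symm

lemma alpha_apply (x : P n) : alpha n x = (eqv n).symm (theq n (eqv n x)) := rfl

lemma alpha_cube : alpha n ^ 3 = 1 := by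
  ext x
  have h1 : (alpha n ^ 3) x = alpha n (alpha n (alpha n x)) := by
    rw [pow_succ, pow_succ, pow_one]
    rfl
  rw [h1]
  simp only [alpha_apply, MulEquiv.apply_symm_apply]
  show (eqv n).symm (thF (thF (thF (eqv n x)))) = (1 : MulAut (P n)) x
  rw [thF_cube]
  exact (eqv n).symm_apply_apply x

lemma alpha_ne_one : alpha n ≠ 1 := by
  intro hcon
  have h1 : alpha n ((eqv n).symm (Dm : MG n)) = (eqv n).symm (Dm : MG n) := by
    rw [hcon]; rfl
  rw [alpha_apply, MulEquiv.apply_symm_apply] at h1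
  have h2 := congrArg (eqv n) h1
  rw [MulEquiv.apply_symm_apply, MulEquiv.apply_symm_apply] at h2
  exact theq_ne h2

lemma not_pgroup : ¬ IsPGroup 2 (MulAut (P n)) := by
  intro h
  obtain ⟨k, hk⟩ := h (alpha n)
  have h1 := Nat.dvd_gcd (orderOf_dvd_of_pow_eq_one hk)
    (orderOf_dvd_of_pow_eq_one (alpha_cube (n := n)))
  have co : Nat.gcd (2 ^ k) 3 = 1 := Nat.Coprime.pow_left k (by decide)
  rw [co, Nat.dvd_one, orderOf_eq_one_iff] at h1
  exact alpha_ne_one h1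

lemma map_lcs (k : ℕ) :
    ((⊤ : Subgroup (P n)).lowerCentralSeries k).map (eqv n).toMonoidHom = (⊤ : Subgroup (MG n)).lowerCentralSeries k := by
  induction k with
  | zero =>
      simp only [Subgroup.lowerCentralSeries_zero]
      exact Subgroup.map_top_of_surjective _ (eqv n).surjective
  | succ k ih =>
      show Subgroup.map (eqv n).toMonoidHom ⁅(⊤ : Subgroup (P n)).lowerCentralSeries k, ⊤⁆ =
        ⁅(⊤ : Subgroup (MG n)).lowerCentralSeries k, ⊤⁆
      rw [Subgroup.map_commutator, ih,
        Subgroup.map_top_of_surjective ((eqv n).toMonoidHom) (eqv n).surjective]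

lemma lcsK_bot : (⊤ : Subgroup (P n)).lowerCentralSeries (n + 3) = ⊥ := by
  have h := map_lcs (n := n) (n + 3)
  rw [lcs_bot] at h
  exact (Subgroup.map_eq_bot_iff_of_injective (f := (eqv n).toMonoidHom)
    (H := (⊤ : Subgroup (P n)).lowerCentralSeries (n + 3)) (eqv n).injective).mp h

lemma lcsK_ne_bot : (⊤ : Subgroup (P n)).lowerCentralSeries (n + 2) ≠ ⊥ := by
  intro hcon
  have h := map_lcs (n := n) (n + 2)
  rw [hcon] at h
  simp only [Subgroup.map_bot] at h
  exact lcs_ne_bot h.symm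

lemma cardK : Nat.card (P n) = 2 ^ (n + 6) :=
  (Nat.card_congr (eqv n).toEquiv).trans card_MG

end KModel
/-- For every `n ≥ 2`, the group `Kₙ^4` has order `2^(n+6)`, nilpotency class `n + 3`
(hence coclass `3`), and its automorphism group is not a `2`-group. -/
theorem K4_card_class_autNotPGroup (n : ℕ) (hn : 2 ≤ n) :
    Nat.card (K4 n) = 2 ^ (n + 6) ∧
      (⊤ : Subgroup (K4 n)).lowerCentralSeries (n + 3) = ⊥ ∧
      (⊤ : Subgroup (K4 n)).lowerCentralSeries (n + 2) ≠ ⊥ ∧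
      ¬ IsPGroup 2 (MulAut (K4 n)) := by
  exact ⟨KModel.cardK, KModel.lcsK_bot, KModel.lcsK_ne_bot, KModel.not_pgroup⟩
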